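/- arXiv:1107.1561 — 2 statements merged into one kernel-verified Lean document; each statement's English description precedes it below -/
import Mathlib

section
/- Let X be a real m×n matrix whose columns are partitioned as X = [X₁, X₂, ..., X_k], where every column of X_i lies in a linear subspace S_i of ℝ^m, and suppose the subspaces S₁, ..., S_k are independent. Then the shape interaction matrix SIM(X) is block diagonal conforming to this partition: for any two column indices p and q belonging to different blocks X_i and X_j (i ≠ j), the (p,q) entry of SIM(X) is zero. -/
open Matrix RealInnerProductSpace

/-- The nuclear norm of a real matrix: the sum of its singular values
(the square roots of the eigenvalues of `Aᵀ * A`). -/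
noncomputable def nuclearNorm {m n : Type*} [Fintype m] [Fintype n] [DecidableEq n]
    (A : Matrix m n ℝ) : ℝ :=
  ∑ i, Real.sqrt ((show (Aᵀ * A).IsHermitian by
    simpa [conjTranspose_eq_transpose_of_trivial] using
      Matrix.isHermitian_conjTranspose_mul_self A).eigenvalues i)

/-- The shape interaction matrix of a real `m × n` matrix `X`: the `n × n`
orthogonal projection matrix onto the row space of `X`. -/
noncomputable def SIM {m n : ℕ} (X : Matrix (Fin m) (Fin n) ℝ) :
    Matrix (Fin n) (Fin n) ℝ :=
  let U : Submodule ℝ (EuclideanSpace ℝ (Fin n)) :=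
    Submodule.span ℝ (Set.range fun i => (WithLp.toLp 2 (X i) : EuclideanSpace ℝ (Fin n)))
  LinearMap.toMatrix'
    ((WithLp.linearEquiv 2 ℝ (Fin n → ℝ)).toLinearMap ∘ₗ
      ((U.subtypeL.comp (U.orthogonalProjection)).toLinearMap :
        EuclideanSpace ℝ (Fin n) →ₗ[ℝ] EuclideanSpace ℝ (Fin n)) ∘ₗ
      (WithLp.linearEquiv 2 ℝ (Fin n → ℝ)).symm.toLinearMap :
      (Fin n → ℝ) →ₗ[ℝ] (Fin n → ℝ))

/-- From an independent family of subspaces we can extract, for each index `t`, a linear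
map that is the identity on `S t` and kills every other `S t'`. -/
lemma exists_proj_of_iSupIndep {m k : ℕ} (S : Fin k → Submodule ℝ (Fin m → ℝ))
    (hind : iSupIndep S) (t : Fin k) :
    ∃ Q : (Fin m → ℝ) →ₗ[ℝ] (Fin m → ℝ),
      (∀ v ∈ S t, Q v = v) ∧ ∀ t', t' ≠ t → ∀ v ∈ S t', Q v = 0 := by
  set B : Submodule ℝ (Fin m → ℝ) := ⨆ (j) (_ : j ≠ t), S j with hB
  have hdisj : Disjoint (S t) B := hind t
  set f : S t →ₗ[ℝ] ((Fin m → ℝ) ⧸ B) := B.mkQ.comp (S t).subtype with hf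
  have hker : LinearMap.ker f = ⊥ := by
    rw [LinearMap.ker_eq_bot']
    intro x hx
    have hxB : (x : Fin m → ℝ) ∈ B := by
      simpa [hf, Submodule.Quotient.mk_eq_zero] using hx
    have : (x : Fin m → ℝ) ∈ (⊥ : Submodule ℝ (Fin m → ℝ)) :=
      hdisj.le_bot ⟨x.2, hxB⟩
    exact Subtype.ext (by simpa using this)
  obtain ⟨g, hg⟩ := f.exists_leftInverse_of_injective hker
  refine ⟨(S t).subtype.comp (g.comp B.mkQ), ?_, ?_⟩
  · intro v hv
    have := congrArg (fun h : S t →ₗ[ℝ] S t => ((h ⟨v, hv⟩ : S t) : Fin m → ℝ)) hg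
    simpa [hf] using this
  · intro t' ht' v hv
    have hvB : v ∈ B := by
      rw [hB]
      exact Submodule.mem_iSup_of_mem t' (Submodule.mem_iSup_of_mem ht' hv)
    have h0 : B.mkQ v = 0 := (Submodule.Quotient.mk_eq_zero B).2 hvB
    simp [LinearMap.comp_apply, h0]

/-- If the columns of `X` are partitioned into blocks (block label `c j` for column `j`),
each column of the `i`-th block lies in a linear subspace `S i` of `ℝ^m`, and the
subspaces `S 1, …, S k` are independent, then `SIM X` is block diagonal conforming to
the partition: entries joining different blocks vanish. -/
theorem sim_block_diagonal {m n k : ℕ} (X : Matrix (Fin m) (Fin n) ℝ)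
    (S : Fin k → Submodule ℝ (Fin m → ℝ)) (c : Fin n → Fin k)
    (hcol : ∀ j : Fin n, (fun i => X i j) ∈ S (c j))
    (hind : iSupIndep S) :
    ∀ p q : Fin n, c p ≠ c q → SIM X p q = 0 := by
  intro p q hpq
  set U : Submodule ℝ (EuclideanSpace ℝ (Fin n)) :=
    Submodule.span ℝ (Set.range fun i => (WithLp.toLp 2 (X i) : EuclideanSpace ℝ (Fin n))) with hU
  set t : Fin k := c q with ht
  -- the coordinate "mask" that keeps only the columns of block `t`
  set Mask : EuclideanSpace ℝ (Fin n) →ₗ[ℝ] EuclideanSpace ℝ (Fin n) :=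
    { toFun := fun v => WithLp.toLp 2 (fun j => if c j = t then v j else 0 : Fin n → ℝ)
      map_add' := by
        intro v w
        ext j
        by_cases h : c j = t <;> simp [h, PiLp.add_apply]
      map_smul' := by
        intro a v
        ext j
        by_cases h : c j = t <;> simp [h, PiLp.smul_apply] } with hMask
  have hMask_apply : ∀ (v : EuclideanSpace ℝ (Fin n)) (j : Fin n),
      Mask v j = if c j = t then v j else 0 := fun v j => rfl
  -- masked rows stay in the row space, thanks to independence
  obtain ⟨Q, hQ1, hQ0⟩ := exists_proj_of_iSupIndep S hind t
  have hrow : ∀ i : Fin m, Mask (WithLp.toLp 2 (X i) : EuclideanSpace ℝ (Fin n)) ∈ U := by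
    intro i
    set M : Matrix (Fin m) (Fin m) ℝ := LinearMap.toMatrix' Q with hM
    have hMv : ∀ v : Fin m → ℝ, M *ᵥ v = Q v := by
      intro v
      have := Matrix.toLin'_toMatrix' (R := ℝ) Q
      calc M *ᵥ v = Matrix.toLin' M v := (Matrix.toLin'_apply M v).symm
        _ = Q v := by rw [this]
    have key : Mask (WithLp.toLp 2 (X i) : EuclideanSpace ℝ (Fin n))
        = ∑ a : Fin m, M i a • (WithLp.toLp 2 (X a) : EuclideanSpace ℝ (Fin n)) := by
      ext j
      have hcolQ : Q (fun i' => X i' j) = if c j = t then (fun i' => X i' j) else 0 := by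
        by_cases h : c j = t
        · rw [if_pos h]
          exact hQ1 _ (h ▸ hcol j)
        · rw [if_neg h]
          exact hQ0 (c j) h _ (hcol j)
      have hsum : (∑ a : Fin m, M i a • (WithLp.toLp 2 (X a) : EuclideanSpace ℝ (Fin n))) j
          = ∑ a : Fin m, M i a * X a j := by
        rw [WithLp.ofLp_sum]
        exact (Finset.sum_apply j Finset.univ _).trans
          (Finset.sum_congr rfl fun a _ => rfl)
      rw [hMask_apply, hsum]
      have : ∑ a : Fin m, M i a * X a j = (M *ᵥ fun a => X a j) i := rfl
      rw [this, hMv, hcolQ]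
      by_cases h : c j = t <;> simp [h]
    rw [key]
    exact Submodule.sum_mem _ fun a _ =>
      Submodule.smul_mem _ _ (Submodule.subset_span ⟨a, rfl⟩)
  have hmaskU : ∀ v ∈ U, Mask v ∈ U := by
    have : U ≤ U.comap Mask := by
      rw [hU, Submodule.span_le]
      rintro _ ⟨i, rfl⟩
      exact hrow i
    exact fun v hv => this hv
  -- the mask is self-adjoint
  have hsa : ∀ v w : EuclideanSpace ℝ (Fin n), (inner (𝕜 := ℝ) (Mask v) (w) : ℝ) = (inner (𝕜 := ℝ) (v) (Mask w) : ℝ) := by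
    intro v w
    simp only [PiLp.inner_apply, RCLike.inner_apply, conj_trivial]
    refine Finset.sum_congr rfl fun j _ => ?_
    rw [hMask_apply, hMask_apply]
    by_cases h : c j = t <;> simp [h]
  -- the basis vector for column `q` is fixed by the mask
  set e : EuclideanSpace ℝ (Fin n) := WithLp.toLp 2 (fun j' => if j' = q then 1 else 0 : Fin n → ℝ) with he
  have hMe : Mask e = e := by
    ext j
    rw [hMask_apply]
    by_cases h : j = q
    · subst h; simp [he, ht]
    · simp [he, h]
  -- the projection of `e` is supported on block `t`
  have hproj : ((U.orthogonalProjection e : EuclideanSpace ℝ (Fin n)))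
      = Mask (U.orthogonalProjection e : EuclideanSpace ℝ (Fin n)) := by
    rw [← Submodule.starProjection_apply]
    apply Submodule.eq_starProjection_of_mem_of_inner_eq_zero
    · exact hmaskU _ (U.orthogonalProjection e).2
    · intro w hw
      have h1 : (inner (𝕜 := ℝ) (e - Mask (U.orthogonalProjection e : EuclideanSpace ℝ (Fin n))) (w) : ℝ)
          = (inner (𝕜 := ℝ) (e - (U.orthogonalProjection e : EuclideanSpace ℝ (Fin n))) (Mask w) : ℝ) := by
        rw [inner_sub_left, inner_sub_left, hsa]
        congr 1
        conv_lhs => rw [← hMe]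
        exact hsa e w
      rw [Submodule.starProjection_apply, h1]
      exact Submodule.starProjection_inner_eq_zero e (Mask w) (hmaskU w hw)
  -- conclude
  have : SIM X p q = ((U.orthogonalProjection e : EuclideanSpace ℝ (Fin n))) p := by
    simp only [SIM, LinearMap.toMatrix'_apply, ContinuousLinearMap.coe_coe,
      ContinuousLinearMap.comp_apply, Submodule.subtypeL_apply]
    rw [show (Pi.single q (1:ℝ) : Fin n → ℝ) = fun j' => if j' = q then 1 else 0 from
      funext fun j' => Pi.single_apply q 1 j']
    rfl
  rw [this, hproj, hMask_apply]
  rw [if_neg (by simpa [ht] using hpq)]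
end

section
/- Let X be a real m×n matrix of rank r with full singular value decompositions X = U_x S_x V_xᵀ, and let Z be a real n×n matrix with full singular value decomposition Z = U_z S_z V_zᵀ. Set M = V_xᵀ V_z and N = V_xᵀ U_z, and partition M and N by rows as M = [M_r; M_{n−r}] and N = [N_r; N_{n−r}], where M_r and N_r consist of the first r rows. Then X = XZ holds if and only if M_r = N_r S_z. -/
open Matrix

/-- Let `X = Ux * Sx * Vxᵀ` be a full SVD of the real `m × n` matrix `X` of rank `r`
(`Ux`, `Vx` orthogonal; `Sx` zero off its main diagonal with nonnegative nonincreasing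
diagonal entries), and let `Z = Uz * diagonal sz * Vzᵀ` be a full SVD of the `n × n`
matrix `Z` (`Uz`, `Vz` orthogonal; `sz` nonnegative and nonincreasing). Set
`M = Vxᵀ * Vz` and `N = Vxᵀ * Uz`, and let `M_r`, `N_r` denote their first `r` rows.
Then `X = X * Z` if and only if `M_r = N_r * diagonal sz`. -/
theorem XZ_iff_Mr_eq_Nr_Sz {m n r : ℕ} (hrm : r ≤ m) (hrn : r ≤ n)
    (X : Matrix (Fin m) (Fin n) ℝ) (Z : Matrix (Fin n) (Fin n) ℝ)
    (Ux : Matrix (Fin m) (Fin m) ℝ) (Sx : Matrix (Fin m) (Fin n) ℝ)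
    (Vx : Matrix (Fin n) (Fin n) ℝ)
    (Uz Vz : Matrix (Fin n) (Fin n) ℝ) (sz : Fin n → ℝ)
    (hUx : Uxᵀ * Ux = 1) (hVx : Vxᵀ * Vx = 1)
    (hUz : Uzᵀ * Uz = 1) (hVz : Vzᵀ * Vz = 1)
    (hSxoff : ∀ (i : Fin m) (j : Fin n), (i : ℕ) ≠ (j : ℕ) → Sx i j = 0)
    (hSxnonneg : ∀ (i : Fin m) (j : Fin n), (i : ℕ) = (j : ℕ) → 0 ≤ Sx i j)
    (hSxanti : ∀ (i i' : Fin m) (j j' : Fin n), (i : ℕ) = (j : ℕ) → (i' : ℕ) = (j' : ℕ) →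
      (i : ℕ) ≤ (i' : ℕ) → Sx i' j' ≤ Sx i j)
    (hX : X = Ux * Sx * Vxᵀ) (hrank : X.rank = r)
    (hsznonneg : ∀ i, 0 ≤ sz i) (hszanti : ∀ i j : Fin n, i ≤ j → sz j ≤ sz i)
    (hZ : Z = Uz * Matrix.diagonal sz * Vzᵀ) :
    X = X * Z ↔
      (Vxᵀ * Vz).submatrix (Fin.castLE hrn) id
        = (Vxᵀ * Uz).submatrix (Fin.castLE hrn) id * Matrix.diagonal sz := by
  classical
  have hVz' : Vz * Vzᵀ = 1 := mul_eq_one_comm.mp hVz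
  have hVx' : Vx * Vxᵀ = 1 := mul_eq_one_comm.mp hVx
  -- the diagonal of Sxᵀ * Sx
  set d : Fin n → ℝ := fun j => if h : (j : ℕ) < m then Sx ⟨j, h⟩ j * Sx ⟨j, h⟩ j else 0 with hd
  have hSxSx : Sxᵀ * Sx = Matrix.diagonal d := by
    ext j j'
    simp only [mul_apply, transpose_apply, diagonal_apply]
    by_cases hjj : j = j'
    · subst hjj
      rw [if_pos rfl, hd]
      by_cases hj : (j : ℕ) < m
      · simp only [dif_pos hj]
        rw [Finset.sum_eq_single (⟨(j : ℕ), hj⟩ : Fin m)]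
        · intro b _ hb
          rw [hSxoff b j (fun h => hb (Fin.ext h)), zero_mul]
        · intro h; exact absurd (Finset.mem_univ _) h
      · simp only [dif_neg hj]
        apply Finset.sum_eq_zero
        intro i _
        rw [hSxoff i j (by have := i.isLt; omega), zero_mul]
    · rw [if_neg hjj]
      apply Finset.sum_eq_zero
      intro i _
      by_cases h1 : (i : ℕ) = (j : ℕ)
      · rw [hSxoff i j' (by intro h2; exact hjj (Fin.ext (h1.symm.trans h2))), mul_zero]
      · rw [hSxoff i j h1, zero_mul]
  -- rank of Sx is r
  have hrankSx : Sx.rank = r := by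
    rw [hX,
      Matrix.rank_mul_eq_left_of_isUnit_det Vxᵀ (Ux * Sx)
        (Matrix.isUnit_det_of_left_inverse hVx'),
      Matrix.rank_mul_eq_right_of_isUnit_det Ux Sx
        (Matrix.isUnit_det_of_left_inverse hUx)] at hrank
    exact hrank
  have hcard : Fintype.card {j : Fin n // d j ≠ 0} = r := by
    rw [← Matrix.rank_diagonal d, ← hSxSx, Matrix.rank_transpose_mul_self, hrankSx]
  -- d has downward closed support
  have hdc : ∀ j j' : Fin n, j' ≤ j → d j ≠ 0 → d j' ≠ 0 := by
    intro j j' hle hj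
    have hjm : (j : ℕ) < m := by
      by_contra h; exact hj (by rw [hd]; simp only [dif_neg h])
    have hj'm : (j' : ℕ) < m := lt_of_le_of_lt hle hjm
    rw [hd] at hj ⊢
    simp only [dif_pos hjm] at hj
    simp only [dif_pos hj'm]
    have h1 : 0 < Sx ⟨j, hjm⟩ j :=
      lt_of_le_of_ne (hSxnonneg _ _ rfl) (fun h => hj (by rw [← h, mul_zero]))
    have h2 : Sx ⟨j, hjm⟩ j ≤ Sx ⟨j', hj'm⟩ j' := hSxanti _ _ _ _ rfl rfl hle
    exact (mul_pos (lt_of_lt_of_le h1 h2) (lt_of_lt_of_le h1 h2)).ne'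
  have hmem : ∀ j : Fin n, d j ≠ 0 ↔ (j : ℕ) < r := by
    have hScard : (Finset.univ.filter (fun j => d j ≠ 0)).card = r := by
      rw [← hcard]; simp [Fintype.card_subtype]
    intro j
    constructor
    · intro hj
      have hsub : Finset.Iic j ⊆ Finset.univ.filter (fun j => d j ≠ 0) := by
        intro j' hj'
        simp only [Finset.mem_filter, Finset.mem_univ, true_and]
        exact hdc j j' (Finset.mem_Iic.mp hj') hj
      have := Finset.card_le_card hsub
      rw [Fin.card_Iic, hScard] at this
      omega
    · intro hj
      by_contra hne
      have hsub : Finset.univ.filter (fun j => d j ≠ 0) ⊆ Finset.Iio j := by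
        intro j' hj'
        simp only [Finset.mem_filter, Finset.mem_univ, true_and] at hj'
        rcases lt_or_ge j' j with h | h
        · exact Finset.mem_Iio.mpr h
        · exact absurd hne (hdc j' j h hj')
      have := Finset.card_le_card hsub
      rw [Fin.card_Iio, hScard] at this
      omega
  -- key characterization of diagonal entries of Sx
  have hkey : ∀ (i : Fin m) (j : Fin n), (i : ℕ) = (j : ℕ) → (Sx i j ≠ 0 ↔ (j : ℕ) < r) := by
    intro i j hij
    have hjm : (j : ℕ) < m := hij ▸ i.isLt
    have hieq : (⟨(j : ℕ), hjm⟩ : Fin m) = i := Fin.ext hij.symm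
    have hdj : d j = Sx i j * Sx i j := by rw [hd]; simp only [dif_pos hjm, hieq]
    rw [← hmem j, hdj, mul_self_ne_zero]
  -- row formula for Sx * C
  have hrow : ∀ (C : Matrix (Fin n) (Fin n) ℝ) (i : Fin m) (j : Fin n),
      (Sx * C) i j = if h : (i : ℕ) < n then Sx i ⟨i, h⟩ * C ⟨i, h⟩ j else 0 := by
    intro C i j
    rw [mul_apply]
    by_cases h : (i : ℕ) < n
    · rw [dif_pos h, Finset.sum_eq_single (⟨(i : ℕ), h⟩ : Fin n)]
      · intro b _ hb
        rw [hSxoff i b (fun hc => hb (Fin.ext hc.symm)), zero_mul]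
      · intro h'; exact absurd (Finset.mem_univ _) h'
    · rw [dif_neg h]
      apply Finset.sum_eq_zero
      intro k _
      rw [hSxoff i k (by have := k.isLt; omega), zero_mul]
  have hrow0 : ∀ (C : Matrix (Fin n) (Fin n) ℝ) (i : Fin m) (j : Fin n), r ≤ (i : ℕ) →
      (Sx * C) i j = 0 := by
    intro C i j hi
    rw [hrow]
    by_cases h : (i : ℕ) < n
    · rw [dif_pos h]
      have : Sx i ⟨i, h⟩ = 0 := by
        by_contra hne
        have := (hkey i ⟨i, h⟩ rfl).mp hne
        simp only at this
        omega
      rw [this, zero_mul]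
    · rw [dif_neg h]
  -- step 1 : X = X * Z ↔ Sx * (Vxᵀ * Vz) = Sx * ((Vxᵀ * Uz) * diagonal sz)
  have step1 : X = X * Z ↔
      Sx * (Vxᵀ * Vz) = Sx * ((Vxᵀ * Uz) * Matrix.diagonal sz) := by
    constructor
    · intro h
      have h1 : Uxᵀ * X * Vz = Uxᵀ * (X * Z) * Vz := by rw [← h]
      rw [hX, hZ] at h1
      calc Sx * (Vxᵀ * Vz) = Uxᵀ * (Ux * Sx * Vxᵀ) * Vz := by
            simp only [Matrix.mul_assoc, ← Matrix.mul_assoc Uxᵀ Ux, hUx, Matrix.one_mul]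
        _ = Uxᵀ * (Ux * Sx * Vxᵀ * (Uz * Matrix.diagonal sz * Vzᵀ)) * Vz := h1
        _ = Sx * ((Vxᵀ * Uz) * Matrix.diagonal sz) := by
            simp only [Matrix.mul_assoc, ← Matrix.mul_assoc Uxᵀ Ux, hUx, Matrix.one_mul]
            rw [show Vzᵀ * Vz = 1 from hVz, Matrix.mul_one]
    · intro hS
      rw [hX, hZ]
      calc Ux * Sx * Vxᵀ
          = Ux * (Sx * (Vxᵀ * Vz) * Vzᵀ) := by
            simp only [Matrix.mul_assoc]
            rw [show Vz * Vzᵀ = 1 from hVz', Matrix.mul_one]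
        _ = Ux * (Sx * ((Vxᵀ * Uz) * Matrix.diagonal sz) * Vzᵀ) := by rw [hS]
        _ = Ux * Sx * Vxᵀ * (Uz * Matrix.diagonal sz * Vzᵀ) := by
            simp only [Matrix.mul_assoc]
  rw [step1]
  -- step 2 : the submatrix reformulation
  have hsub : (Vxᵀ * Uz).submatrix (Fin.castLE hrn) id * Matrix.diagonal sz
      = ((Vxᵀ * Uz) * Matrix.diagonal sz).submatrix (Fin.castLE hrn) id := rfl
  rw [hsub]
  set A := Vxᵀ * Vz with hA
  set B := (Vxᵀ * Uz) * Matrix.diagonal sz with hB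
  constructor
  · intro h
    ext k j
    have him : (k : ℕ) < m := lt_of_lt_of_le k.isLt hrm
    have hin : (k : ℕ) < n := lt_of_lt_of_le k.isLt hrn
    have h1 := congrFun (congrFun h ⟨(k : ℕ), him⟩) j
    rw [hrow, hrow, dif_pos hin, dif_pos hin] at h1
    have hne : Sx ⟨(k : ℕ), him⟩ ⟨(k : ℕ), hin⟩ ≠ 0 :=
      (hkey _ _ rfl).mpr k.isLt
    have h2 := mul_left_cancel₀ hne h1
    exact h2
  · intro h
    ext i j
    by_cases hir : (i : ℕ) < r
    · have hin : (i : ℕ) < n := lt_of_lt_of_le hir hrn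
      rw [hrow, hrow, dif_pos hin, dif_pos hin]
      have h1 := congrFun (congrFun h ⟨(i : ℕ), hir⟩) j
      simp only [Matrix.submatrix_apply, id] at h1
      have : (Fin.castLE hrn ⟨(i : ℕ), hir⟩ : Fin n) = ⟨(i : ℕ), hin⟩ := rfl
      rw [this] at h1
      rw [h1]
    · rw [hrow0 _ i j (le_of_not_gt hir), hrow0 _ i j (le_of_not_gt hir)]
end
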